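/- Under the hypotheses of the SOTS residual identity — namely: k_{ij} : ℝ^n → ℝ are C¹ and ℤ^n-periodic; k̂_{ij} ∈ ℝ are constants; T⁽⁰⁾ : Ω → ℝ is C⁴ on an open set Ω ⊆ ℝ^n and solves −k̂_{ij}∂_i∂_j T⁽⁰⁾ = h on Ω; M_α : ℝ^n → ℝ are C² and ℤ^n-periodic solving ∂_{y_i}(k_{ij}∂_{y_j}M_α) = −∂_{y_i}k_{iα}; M_{α₁α₂} : ℝ^n → ℝ are C² and ℤ^n-periodic solving ∂_{y_i}(k_{ij}∂_{y_j}M_{α₁α₂}) = k̂_{α₁α₂} − k_{α₁α₂} − ∂_{y_i}(k_{iα₂}M_{α₁}) − k_{α₁j}∂_{y_j}M_{α₂} — define for each ε > 0 the SOTS approximation T^{(2ε)}(x) = T⁽⁰⁾(x) + ε M_α(x/ε)∂_α T⁽⁰⁾(x) + ε² M_{α₁α₂}(x/ε)∂²_{α₁α₂}T⁽⁰⁾(x). Then for every compact set K ⊂ Ω there exists a constant C > 0, independent of ε, such that for all ε ∈ (0,1] and all x ∈ K: | −∂_i( k_{ij}(x/ε) ∂_j T^{(2ε)} )(x) − h(x)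 | ≤ C ε. -/

import Mathlib

open scoped BigOperators

/-- Partial derivative of `f : ℝ^n → ℝ` in the `i`-th coordinate direction. -/
noncomputable def pd {n : ℕ} (i : Fin n) (f : (Fin n → ℝ) → ℝ) (y : Fin n → ℝ) : ℝ :=
  fderiv ℝ f y (Pi.single i 1)

section Helpers
variable {n : ℕ}




lemma pd_congr_nhds {i : Fin n} {f g : (Fin n → ℝ) → ℝ} {x : Fin n → ℝ}
    (h : f =ᶠ[nhds x] g) : pd i f x = pd i g x := by
  unfold pd; rw [h.fderiv_eq]

lemma pd_add {i : Fin n} {f g : (Fin n → ℝ) → ℝ} {x : Fin n → ℝ}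
    (hf : DifferentiableAt ℝ f x) (hg : DifferentiableAt ℝ g x) :
    pd i (fun y => f y + g y) x = pd i f x + pd i g x := by
  unfold pd
  rw [fderiv_fun_add hf hg]; rfl

lemma pd_mul {i : Fin n} {f g : (Fin n → ℝ) → ℝ} {x : Fin n → ℝ}
    (hf : DifferentiableAt ℝ f x) (hg : DifferentiableAt ℝ g x) :
    pd i (fun y => f y * g y) x = f x * pd i g x + pd i f x * g x := by
  unfold pd
  rw [fderiv_fun_mul hf hg]
  simp [mul_comm]

lemma pd_const_mul {i : Fin n} {f : (Fin n → ℝ) → ℝ} {x : Fin n → ℝ} (c : ℝ)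
    (hf : DifferentiableAt ℝ f x) :
    pd i (fun y => c * f y) x = c * pd i f x := by
  unfold pd
  rw [fderiv_const_mul hf]; rfl

lemma pd_sum {i : Fin n} {ι : Type*} (s : Finset ι) {f : ι → (Fin n → ℝ) → ℝ} {x : Fin n → ℝ}
    (hf : ∀ j ∈ s, DifferentiableAt ℝ (f j) x) :
    pd i (fun y => ∑ j ∈ s, f j y) x = ∑ j ∈ s, pd i (f j) x := by
  unfold pd
  rw [fderiv_fun_sum hf]; simp

lemma diff_scale {g : (Fin n → ℝ) → ℝ} {x : Fin n → ℝ} {ε : ℝ}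
    (hg : DifferentiableAt ℝ g (ε⁻¹ • x)) :
    DifferentiableAt ℝ (fun x' => g (ε⁻¹ • x')) x := by
  exact hg.comp x ((differentiable_id.const_smul ε⁻¹).differentiableAt)

lemma pd_scale {i : Fin n} {g : (Fin n → ℝ) → ℝ} {x : Fin n → ℝ} {ε : ℝ}
    (hg : DifferentiableAt ℝ g (ε⁻¹ • x)) :
    pd i (fun x' => g (ε⁻¹ • x')) x = ε⁻¹ * pd i g (ε⁻¹ • x) := by
  unfold pd
  have hL : HasFDerivAt (fun x' : Fin n → ℝ => ε⁻¹ • x')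
      (ε⁻¹ • ContinuousLinearMap.id ℝ (Fin n → ℝ)) x :=
    (hasFDerivAt_id x).const_smul ε⁻¹
  have h2 : HasFDerivAt (fun x' : Fin n → ℝ => g (ε⁻¹ • x'))
      ((fderiv ℝ g (ε⁻¹ • x)).comp (ε⁻¹ • ContinuousLinearMap.id ℝ (Fin n → ℝ))) x :=
    hg.hasFDerivAt.comp x hL
  rw [h2.fderiv]
  simp [map_smul, smul_eq_mul]


lemma contDiff_pd {m : ℕ} {f : (Fin n → ℝ) → ℝ} (i : Fin n)
    (hf : ContDiff ℝ (m + 1) f) : ContDiff ℝ m (pd i f) := by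
  have h1 : ContDiff ℝ m (fderiv ℝ f) := hf.fderiv_right (by norm_cast)
  exact h1.clm_apply contDiff_const

lemma contDiffOn_pd {m : ℕ} {f : (Fin n → ℝ) → ℝ} {s : Set (Fin n → ℝ)} (i : Fin n)
    (hs : IsOpen s) (hf : ContDiffOn ℝ (m + 1) f s) : ContDiffOn ℝ m (pd i f) s := by
  have h1 : ContDiffOn ℝ m (fderiv ℝ f) s := by
    exact hf.fderiv_of_isOpen (m := (m : ℕ∞)) hs le_rfl
  exact h1.clm_apply contDiffOn_const

lemma continuous_pd {f : (Fin n → ℝ) → ℝ} (i : Fin n)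
    (hf : ContDiff ℝ 1 f) : Continuous (pd i f) := by
  have : ContDiff ℝ (0 : ℕ) (pd i f) := contDiff_pd i (by exact_mod_cast hf)
  exact this.continuous

lemma pd_periodic {f : (Fin n → ℝ) → ℝ} (hf : Differentiable ℝ f)
    (hper : ∀ (y : Fin n → ℝ) (z : Fin n → ℤ), f (y + fun t => (z t : ℝ)) = f y)
    (i : Fin n) (y : Fin n → ℝ) (z : Fin n → ℤ) :
    pd i f (y + fun t => (z t : ℝ)) = pd i f y := by
  set c : Fin n → ℝ := fun t => (z t : ℝ)
  have hfun : (fun y' => f (y' + c)) = f := by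
    funext y'; exact hper y' z
  have h1 : HasFDerivAt (fun y' => f (y' + c)) (fderiv ℝ f (y + c)) y := by
    have := ((hf (y + c)).hasFDerivAt).comp y
      ((hasFDerivAt_id y).add_const c)
    exact this
  have h2 : fderiv ℝ f y = fderiv ℝ f (y + c) := by
    rw [← h1.fderiv, hfun]
  unfold pd
  rw [h2]

/-- a continuous ℤⁿ-periodic function is bounded -/
lemma bounded_of_periodic {f : (Fin n → ℝ) → ℝ} (hf : Continuous f)
    (hper : ∀ (y : Fin n → ℝ) (z : Fin n → ℤ), f (y + fun t => (z t : ℝ)) = f y) :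
    ∃ C : ℝ, ∀ y, |f y| ≤ C := by
  obtain ⟨C, hC⟩ := (isCompact_Icc (a := (0 : Fin n → ℝ)) (b := 1)).exists_bound_of_continuousOn
    hf.continuousOn
  refine ⟨C, fun y => ?_⟩
  set z : Fin n → ℤ := fun t => ⌊y t⌋
  set w : Fin n → ℝ := fun t => y t - (z t : ℝ)
  have hw : w ∈ Set.Icc (0 : Fin n → ℝ) 1 := by
    constructor
    · intro t; simp only [w, z, Pi.zero_apply]
      exact sub_nonneg.mpr (Int.floor_le (y t))
    · intro t; simp only [w, z, Pi.one_apply]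
      have := Int.lt_floor_add_one (y t)
      linarith
  have : f y = f w := by
    have : y = w + fun t => ((z t : ℤ) : ℝ) := by funext t; simp [w]
    rw [this, hper]
  rw [this]
  simpa using hC w hw


lemma pd_pd_eq_snd {f : (Fin n → ℝ) → ℝ} {x : Fin n → ℝ}
    (hd : DifferentiableAt ℝ (fderiv ℝ f) x) (a b : Fin n) :
    pd a (pd b f) x = fderiv ℝ (fderiv ℝ f) x (Pi.single a 1) (Pi.single b 1) := by
  have h1 : HasFDerivAt (pd b f)
      ((ContinuousLinearMap.apply ℝ ℝ (Pi.single b 1 : Fin n → ℝ)).comp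
        (fderiv ℝ (fderiv ℝ f) x)) x := by
    exact (ContinuousLinearMap.apply ℝ ℝ (Pi.single b 1 : Fin n → ℝ)).hasFDerivAt.comp x
      hd.hasFDerivAt
  have h2 : pd b f = fun y => (fderiv ℝ f y) (Pi.single b 1) := rfl
  unfold pd
  rw [show (fun y => (fderiv ℝ f y) (Pi.single b 1)) = pd b f from rfl, h1.fderiv]
  rfl

lemma pd_pd_symm {f : (Fin n → ℝ) → ℝ} {s : Set (Fin n → ℝ)} (hs : IsOpen s)
    (hf : ContDiffOn ℝ 2 f s) {x : Fin n → ℝ} (hx : x ∈ s) (a b : Fin n) :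
    pd a (pd b f) x = pd b (pd a f) x := by
  have hfa : ContDiffAt ℝ 2 f x := (hf x hx).contDiffAt (hs.mem_nhds hx)
  have hd : DifferentiableAt ℝ (fderiv ℝ f) x :=
    (hfa.fderiv_right (m := 1) (by norm_num)).differentiableAt (by norm_num)
  have hsym := hfa.isSymmSndFDerivAt (by simp)
  rw [pd_pd_eq_snd hd, pd_pd_eq_snd hd, hsym]


lemma sum3_rot (f : Fin n → Fin n → Fin n → ℝ) :
    ∑ i, ∑ j, ∑ a, f i j a = ∑ a, ∑ j, ∑ i, f i j a := by
  calc ∑ i, ∑ j, ∑ a, f i j a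
      = ∑ i, ∑ a, ∑ j, f i j a := Finset.sum_congr rfl fun i _ => Finset.sum_comm
    _ = ∑ a, ∑ i, ∑ j, f i j a := Finset.sum_comm
    _ = ∑ a, ∑ j, ∑ i, f i j a := Finset.sum_congr rfl fun a _ => Finset.sum_comm

lemma sum3_mid (f : Fin n → Fin n → Fin n → ℝ) :
    ∑ i, ∑ j, ∑ a, f i j a = ∑ i, ∑ a, ∑ j, f i j a :=
  Finset.sum_congr rfl fun _ _ => Finset.sum_comm

lemma sum4_swap (f : Fin n → Fin n → Fin n → Fin n → ℝ) :
    ∑ i, ∑ j, ∑ a, ∑ b, f i j a b = ∑ a, ∑ b, ∑ i, ∑ j, f i j a b := by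
  calc ∑ i, ∑ j, ∑ a, ∑ b, f i j a b
      = ∑ i, ∑ a, ∑ j, ∑ b, f i j a b :=
        Finset.sum_congr rfl fun i _ => Finset.sum_comm
    _ = ∑ a, ∑ i, ∑ j, ∑ b, f i j a b := Finset.sum_comm
    _ = ∑ a, ∑ i, ∑ b, ∑ j, f i j a b :=
        Finset.sum_congr rfl fun a _ => Finset.sum_congr rfl fun i _ => Finset.sum_comm
    _ = ∑ a, ∑ b, ∑ i, ∑ j, f i j a b :=
        Finset.sum_congr rfl fun a _ => Finset.sum_comm

lemma sots_algebra {ε : ℝ} (hε : ε ≠ 0)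
    (KV DK : Fin n → Fin n → ℝ)
    (MV : Fin n → ℝ) (DM : Fin n → Fin n → ℝ) (DDM : Fin n → Fin n → Fin n → ℝ)
    (M2V : Fin n → Fin n → ℝ) (DM2 : Fin n → Fin n → Fin n → ℝ)
    (DDM2 : Fin n → Fin n → Fin n → Fin n → ℝ)
    (khat : Fin n → Fin n → ℝ)
    (T1 : Fin n → ℝ) (T2 : Fin n → Fin n → ℝ) (T3 : Fin n → Fin n → Fin n → ℝ)
    (T4 : Fin n → Fin n → Fin n → Fin n → ℝ) (hx : ℝ)
    (Hsym : ∀ a b, T2 a b = T2 b a)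
    (H1 : ∀ α, ∑ i, ∑ j, (DK i j * DM j α + KV i j * DDM i j α) = -∑ i, DK i α)
    (H2 : ∀ a b, ∑ i, ∑ j, (DK i j * DM2 j a b + KV i j * DDM2 i j a b)
        = khat a b - KV a b - ∑ i, (DK i b * MV a + KV i b * DM i a)
          - ∑ j, KV a j * DM j b)
    (H3 : -∑ a, ∑ b, khat a b * T2 a b = hx) :
    ∑ i, ∑ j, (KV i j *
        (T2 i j
          + (ε * ∑ α, MV α * T3 i j α + ∑ α, DM i α * T2 j α)
          + (∑ α, DM j α * T2 i α + ε⁻¹ * ∑ α, DDM i j α * T1 α)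
          + (ε ^ 2 * ∑ a, ∑ b, M2V a b * T4 i j a b
              + ε * ∑ a, ∑ b, DM2 i a b * T3 j a b)
          + (ε * ∑ a, ∑ b, DM2 j a b * T3 i a b
              + ∑ a, ∑ b, DDM2 i j a b * T2 a b))
      + ε⁻¹ * DK i j *
        (T1 j
          + ε * ∑ α, MV α * T2 j α + ∑ α, DM j α * T1 α
          + ε ^ 2 * ∑ a, ∑ b, M2V a b * T3 j a b
          + ε * ∑ a, ∑ b, DM2 j a b * T2 a b))
    = -hx + ε * (
        (∑ i, ∑ j, ∑ a, ∑ b, DK i j * (M2V a b * T3 j a b))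
      + (∑ i, ∑ j, ∑ α, KV i j * (MV α * T3 i j α))
      + (∑ i, ∑ j, ∑ a, ∑ b, KV i j * (DM2 i a b * T3 j a b))
      + (∑ i, ∑ j, ∑ a, ∑ b, KV i j * (DM2 j a b * T3 i a b))
      + ε * ∑ i, ∑ j, ∑ a, ∑ b, KV i j * (M2V a b * T4 i j a b)) := by
  -- Step 1: split into the 14 grouped sums (folded form)
  have key : ∀ i j : Fin n, (KV i j *
        (T2 i j
          + (ε * ∑ α, MV α * T3 i j α + ∑ α, DM i α * T2 j α)
          + (∑ α, DM j α * T2 i α + ε⁻¹ * ∑ α, DDM i j α * T1 α)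
          + (ε ^ 2 * ∑ a, ∑ b, M2V a b * T4 i j a b
              + ε * ∑ a, ∑ b, DM2 i a b * T3 j a b)
          + (ε * ∑ a, ∑ b, DM2 j a b * T3 i a b
              + ∑ a, ∑ b, DDM2 i j a b * T2 a b))
      + ε⁻¹ * DK i j *
        (T1 j
          + ε * ∑ α, MV α * T2 j α + ∑ α, DM j α * T1 α
          + ε ^ 2 * ∑ a, ∑ b, M2V a b * T3 j a b
          + ε * ∑ a, ∑ b, DM2 j a b * T2 a b))
      = ε⁻¹ * (DK i j * T1 j)
        + DK i j * (∑ α, MV α * T2 j α)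
        + ε⁻¹ * (DK i j * ∑ α, DM j α * T1 α)
        + ε * (DK i j * ∑ a, ∑ b, M2V a b * T3 j a b)
        + DK i j * (∑ a, ∑ b, DM2 j a b * T2 a b)
        + KV i j * T2 i j
        + ε * (KV i j * ∑ α, MV α * T3 i j α)
        + KV i j * (∑ α, DM i α * T2 j α)
        + KV i j * (∑ α, DM j α * T2 i α)
        + ε⁻¹ * (KV i j * ∑ α, DDM i j α * T1 α)
        + ε ^ 2 * (KV i j * ∑ a, ∑ b, M2V a b * T4 i j a b)
        + ε * (KV i j * ∑ a, ∑ b, DM2 i a b * T3 j a b)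
        + ε * (KV i j * ∑ a, ∑ b, DM2 j a b * T3 i a b)
        + KV i j * (∑ a, ∑ b, DDM2 i j a b * T2 a b) := by
    intro i j
    field_simp
    ring
  rw [Finset.sum_congr rfl fun i _ => Finset.sum_congr rfl fun j _ => key i j]
  simp only [Finset.sum_add_distrib, ← Finset.mul_sum]
  -- zero-order (ε⁻¹) part vanishes via the first cell equation
  have hzero : (∑ i, ∑ j, DK i j * ∑ α, DM j α * T1 α)
      + (∑ i, ∑ j, KV i j * ∑ α, DDM i j α * T1 α)
      = -(∑ i, ∑ j, DK i j * T1 j) := by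
    calc (∑ i, ∑ j, DK i j * ∑ α, DM j α * T1 α)
        + (∑ i, ∑ j, KV i j * ∑ α, DDM i j α * T1 α)
        = ∑ i, ∑ j, ∑ α, ((DK i j * DM j α + KV i j * DDM i j α) * T1 α) := by
          rw [← Finset.sum_add_distrib]
          refine Finset.sum_congr rfl fun i _ => ?_
          rw [← Finset.sum_add_distrib]
          refine Finset.sum_congr rfl fun j _ => ?_
          rw [Finset.mul_sum, Finset.mul_sum, ← Finset.sum_add_distrib]
          exact Finset.sum_congr rfl fun α _ => by ring
      _ = ∑ α, ∑ j, ∑ i, ((DK i j * DM j α + KV i j * DDM i j α) * T1 α) :=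
          sum3_rot _
      _ = ∑ α, (∑ i, ∑ j, (DK i j * DM j α + KV i j * DDM i j α)) * T1 α := by
          refine Finset.sum_congr rfl fun α _ => ?_
          rw [Finset.sum_comm, Finset.sum_mul]
          exact Finset.sum_congr rfl fun i _ => (Finset.sum_mul _ _ _).symm
      _ = ∑ α, (-∑ i, DK i α) * T1 α := by
          exact Finset.sum_congr rfl fun α _ => by rw [H1 α]
      _ = -∑ α, ∑ i, (DK i α * T1 α) := by
          rw [← Finset.sum_neg_distrib]
          exact Finset.sum_congr rfl fun α _ => by rw [neg_mul, Finset.sum_mul]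
      _ = -(∑ i, ∑ j, DK i j * T1 j) := by rw [Finset.sum_comm]
  -- the ε⁰ part gives -h via the second cell equation + homogenized equation
  have h514 : (∑ i, ∑ j, DK i j * ∑ a, ∑ b, DM2 j a b * T2 a b)
      + (∑ i, ∑ j, KV i j * ∑ a, ∑ b, DDM2 i j a b * T2 a b)
      = ∑ a, ∑ b, ((khat a b - KV a b
          - ((∑ i, DK i b * MV a) + (∑ i, KV i b * DM i a))
          - ∑ j, KV a j * DM j b) * T2 a b) := by
    have d1 : (∑ i, ∑ j, DK i j * ∑ a, ∑ b, DM2 j a b * T2 a b)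
        = ∑ i, ∑ j, ∑ a, ∑ b, DK i j * (DM2 j a b * T2 a b) := by
      simp only [Finset.mul_sum]
    have d2 : (∑ i, ∑ j, KV i j * ∑ a, ∑ b, DDM2 i j a b * T2 a b)
        = ∑ i, ∑ j, ∑ a, ∑ b, KV i j * (DDM2 i j a b * T2 a b) := by
      simp only [Finset.mul_sum]
    rw [d1, d2, sum4_swap, sum4_swap (fun i j a b => KV i j * (DDM2 i j a b * T2 a b))]
    rw [← Finset.sum_add_distrib]
    refine Finset.sum_congr rfl fun a _ => ?_
    rw [← Finset.sum_add_distrib]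
    refine Finset.sum_congr rfl fun b _ => ?_
    have : (∑ i, ∑ j, DK i j * (DM2 j a b * T2 a b))
        + (∑ i, ∑ j, KV i j * (DDM2 i j a b * T2 a b))
        = (∑ i, ∑ j, (DK i j * DM2 j a b + KV i j * DDM2 i j a b)) * T2 a b := by
      rw [Finset.sum_mul, ← Finset.sum_add_distrib]
      refine Finset.sum_congr rfl fun i _ => ?_
      rw [Finset.sum_mul, ← Finset.sum_add_distrib]
      exact Finset.sum_congr rfl fun j _ => by ring
    rw [this, H2 a b, Finset.sum_add_distrib]
  have h2' : (∑ i, ∑ j, DK i j * ∑ α, MV α * T2 j α)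
      = ∑ a, ∑ b, ((∑ i, DK i b * MV a) * T2 a b) := by
    calc (∑ i, ∑ j, DK i j * ∑ α, MV α * T2 j α)
        = ∑ i, ∑ j, ∑ α, DK i j * (MV α * T2 α j) := by
          simp only [Finset.mul_sum]
          exact Finset.sum_congr rfl fun i _ => Finset.sum_congr rfl fun j _ =>
            Finset.sum_congr rfl fun α _ => by rw [Hsym j α]
      _ = ∑ α, ∑ j, ∑ i, DK i j * (MV α * T2 α j) := sum3_rot _
      _ = ∑ a, ∑ b, ((∑ i, DK i b * MV a) * T2 a b) := by
          refine Finset.sum_congr rfl fun a _ => Finset.sum_congr rfl fun b _ => ?_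
          rw [Finset.sum_mul]
          exact Finset.sum_congr rfl fun i _ => by ring
  have h8' : (∑ i, ∑ j, KV i j * ∑ α, DM i α * T2 j α)
      = ∑ a, ∑ b, ((∑ i, KV i b * DM i a) * T2 a b) := by
    calc (∑ i, ∑ j, KV i j * ∑ α, DM i α * T2 j α)
        = ∑ i, ∑ j, ∑ α, KV i j * (DM i α * T2 α j) := by
          simp only [Finset.mul_sum]
          exact Finset.sum_congr rfl fun i _ => Finset.sum_congr rfl fun j _ =>
            Finset.sum_congr rfl fun α _ => by rw [Hsym j α]
      _ = ∑ α, ∑ j, ∑ i, KV i j * (DM i α * T2 α j) := sum3_rot _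
      _ = ∑ a, ∑ b, ((∑ i, KV i b * DM i a) * T2 a b) := by
          refine Finset.sum_congr rfl fun a _ => Finset.sum_congr rfl fun b _ => ?_
          rw [Finset.sum_mul]
          exact Finset.sum_congr rfl fun i _ => by ring
  have h9' : (∑ i, ∑ j, KV i j * ∑ α, DM j α * T2 i α)
      = ∑ a, ∑ b, ((∑ j, KV a j * DM j b) * T2 a b) := by
    calc (∑ i, ∑ j, KV i j * ∑ α, DM j α * T2 i α)
        = ∑ i, ∑ j, ∑ α, KV i j * (DM j α * T2 i α) := by
          simp only [Finset.mul_sum]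
      _ = ∑ i, ∑ α, ∑ j, KV i j * (DM j α * T2 i α) := sum3_mid _
      _ = ∑ a, ∑ b, ((∑ j, KV a j * DM j b) * T2 a b) := by
          refine Finset.sum_congr rfl fun a _ => Finset.sum_congr rfl fun b _ => ?_
          rw [Finset.sum_mul]
          exact Finset.sum_congr rfl fun j _ => by ring
  have hmain : (∑ i, ∑ j, DK i j * ∑ α, MV α * T2 j α)
      + (∑ i, ∑ j, DK i j * ∑ a, ∑ b, DM2 j a b * T2 a b)
      + (∑ i, ∑ j, KV i j * T2 i j)
      + (∑ i, ∑ j, KV i j * ∑ α, DM i α * T2 j α)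
      + (∑ i, ∑ j, KV i j * ∑ α, DM j α * T2 i α)
      + (∑ i, ∑ j, KV i j * ∑ a, ∑ b, DDM2 i j a b * T2 a b) = -hx := by
    have hre : (∑ i, ∑ j, DK i j * ∑ α, MV α * T2 j α)
        + (∑ i, ∑ j, DK i j * ∑ a, ∑ b, DM2 j a b * T2 a b)
        + (∑ i, ∑ j, KV i j * T2 i j)
        + (∑ i, ∑ j, KV i j * ∑ α, DM i α * T2 j α)
        + (∑ i, ∑ j, KV i j * ∑ α, DM j α * T2 i α)
        + (∑ i, ∑ j, KV i j * ∑ a, ∑ b, DDM2 i j a b * T2 a b)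
        = ((∑ i, ∑ j, DK i j * ∑ a, ∑ b, DM2 j a b * T2 a b)
            + (∑ i, ∑ j, KV i j * ∑ a, ∑ b, DDM2 i j a b * T2 a b))
          + (∑ i, ∑ j, DK i j * ∑ α, MV α * T2 j α)
          + (∑ i, ∑ j, KV i j * ∑ α, DM i α * T2 j α)
          + (∑ i, ∑ j, KV i j * ∑ α, DM j α * T2 i α)
          + (∑ i, ∑ j, KV i j * T2 i j) := by ring
    rw [hre, h514, h2', h8', h9']
    have hfin : (∑ a, ∑ b, ((khat a b - KV a b
          - ((∑ i, DK i b * MV a) + (∑ i, KV i b * DM i a))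
          - ∑ j, KV a j * DM j b) * T2 a b))
        + (∑ a, ∑ b, ((∑ i, DK i b * MV a) * T2 a b))
        + (∑ a, ∑ b, ((∑ i, KV i b * DM i a) * T2 a b))
        + (∑ a, ∑ b, ((∑ j, KV a j * DM j b) * T2 a b))
        + (∑ i, ∑ j, KV i j * T2 i j)
        = ∑ a, ∑ b, khat a b * T2 a b := by
      have : (∑ i, ∑ j, KV i j * T2 i j) = ∑ a, ∑ b, KV a b * T2 a b := rfl
      rw [this, ← Finset.sum_add_distrib, ← Finset.sum_add_distrib,
        ← Finset.sum_add_distrib, ← Finset.sum_add_distrib]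
      refine Finset.sum_congr rfl fun a _ => ?_
      rw [← Finset.sum_add_distrib, ← Finset.sum_add_distrib,
        ← Finset.sum_add_distrib, ← Finset.sum_add_distrib]
      exact Finset.sum_congr rfl fun b _ => by ring
    rw [hfin]
    linarith [H3]
  -- remainder sums: fold/unfold
  have r1 : (∑ i, ∑ j, DK i j * ∑ a, ∑ b, M2V a b * T3 j a b)
      = ∑ i, ∑ j, ∑ a, ∑ b, DK i j * (M2V a b * T3 j a b) := by
    simp only [Finset.mul_sum]
  have r2 : (∑ i, ∑ j, KV i j * ∑ α, MV α * T3 i j α)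
      = ∑ i, ∑ j, ∑ α, KV i j * (MV α * T3 i j α) := by
    simp only [Finset.mul_sum]
  have r3 : (∑ i, ∑ j, KV i j * ∑ a, ∑ b, DM2 i a b * T3 j a b)
      = ∑ i, ∑ j, ∑ a, ∑ b, KV i j * (DM2 i a b * T3 j a b) := by
    simp only [Finset.mul_sum]
  have r4 : (∑ i, ∑ j, KV i j * ∑ a, ∑ b, DM2 j a b * T3 i a b)
      = ∑ i, ∑ j, ∑ a, ∑ b, KV i j * (DM2 j a b * T3 i a b) := by
    simp only [Finset.mul_sum]
  have r5 : (∑ i, ∑ j, KV i j * ∑ a, ∑ b, M2V a b * T4 i j a b)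
      = ∑ i, ∑ j, ∑ a, ∑ b, KV i j * (M2V a b * T4 i j a b) := by
    simp only [Finset.mul_sum]
  rw [r1, r2, r3, r4, r5]
  linear_combination ε⁻¹ * hzero + hmain


lemma abs_sum_le_card {f : Fin n → ℝ} {B : ℝ} (h : ∀ i, |f i| ≤ B) :
    |∑ i, f i| ≤ n * B := by
  calc |∑ i, f i| ≤ ∑ i, |f i| := Finset.abs_sum_le_sum_abs _ _
    _ ≤ ∑ _i : Fin n, B := Finset.sum_le_sum fun i _ => h i
    _ = n * B := by simp [Finset.sum_const, Finset.card_univ, nsmul_eq_mul]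

lemma abs_sum3_le {t : Fin n → Fin n → Fin n → ℝ} {B : ℝ}
    (h : ∀ i j a, |t i j a| ≤ B) :
    |∑ i, ∑ j, ∑ a, t i j a| ≤ (n : ℝ) ^ 3 * B := by
  have h2 : ∀ i j, |∑ a, t i j a| ≤ n * B := fun i j => abs_sum_le_card (h i j)
  have h1 : ∀ i, |∑ j, ∑ a, t i j a| ≤ n * (n * B) := fun i => abs_sum_le_card (h2 i)
  have := abs_sum_le_card h1
  calc |∑ i, ∑ j, ∑ a, t i j a| ≤ n * (n * (n * B)) := this
    _ = (n : ℝ) ^ 3 * B := by ring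

lemma abs_sum4_le {t : Fin n → Fin n → Fin n → Fin n → ℝ} {B : ℝ}
    (h : ∀ i j a b, |t i j a b| ≤ B) :
    |∑ i, ∑ j, ∑ a, ∑ b, t i j a b| ≤ (n : ℝ) ^ 4 * B := by
  have h3 : ∀ i j a, |∑ b, t i j a b| ≤ n * B := fun i j a => abs_sum_le_card (h i j a)
  have h2 : ∀ i j, |∑ a, ∑ b, t i j a b| ≤ n * (n * B) := fun i j => abs_sum_le_card (h3 i j)
  have h1 : ∀ i, |∑ j, ∑ a, ∑ b, t i j a b| ≤ n * (n * (n * B)) :=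
    fun i => abs_sum_le_card (h2 i)
  have := abs_sum_le_card h1
  calc |∑ i, ∑ j, ∑ a, ∑ b, t i j a b| ≤ n * (n * (n * (n * B))) := this
    _ = (n : ℝ) ^ 4 * B := by ring

lemma abs_le_sum2 (g : Fin n → Fin n → ℝ) (i j : Fin n) :
    |g i j| ≤ ∑ i', ∑ j', |g i' j'| := by
  have h1 : |g i j| ≤ ∑ j', |g i j'| :=
    Finset.single_le_sum (f := fun j' => |g i j'|) (fun _ _ => abs_nonneg _) (Finset.mem_univ j)
  refine h1.trans ?_
  exact Finset.single_le_sum (f := fun i' => ∑ j', |g i' j'|)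
    (fun _ _ => Finset.sum_nonneg fun _ _ => abs_nonneg _) (Finset.mem_univ i)

lemma abs_le_sum1 (g : Fin n → ℝ) (i : Fin n) : |g i| ≤ ∑ i', |g i'| :=
  Finset.single_le_sum (f := fun i' => |g i'|) (fun _ _ => abs_nonneg _) (Finset.mem_univ i)

lemma abs_le_sum3 (g : Fin n → Fin n → Fin n → ℝ) (l i j : Fin n) :
    |g l i j| ≤ ∑ l', ∑ i', ∑ j', |g l' i' j'| := by
  have h1 : |g l i j| ≤ ∑ i', ∑ j', |g l i' j'| := abs_le_sum2 (g l) i j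
  refine h1.trans ?_
  exact Finset.single_le_sum (f := fun l' => ∑ i', ∑ j', |g l' i' j'|)
    (fun _ _ => Finset.sum_nonneg fun _ _ => Finset.sum_nonneg fun _ _ => abs_nonneg _)
    (Finset.mem_univ l)

lemma abs_le_sum4 (g : Fin n → Fin n → Fin n → Fin n → ℝ) (l i j m : Fin n) :
    |g l i j m| ≤ ∑ l', ∑ i', ∑ j', ∑ m', |g l' i' j' m'| := by
  have h1 : |g l i j m| ≤ ∑ i', ∑ j', ∑ m', |g l i' j' m'| := abs_le_sum3 (g l) i j m
  refine h1.trans ?_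
  exact Finset.single_le_sum (f := fun l' => ∑ i', ∑ j', ∑ m', |g l' i' j' m'|)
    (fun _ _ => Finset.sum_nonneg fun _ _ => Finset.sum_nonneg fun _ _ =>
      Finset.sum_nonneg fun _ _ => abs_nonneg _) (Finset.mem_univ l)

end Helpers

set_option maxHeartbeats 1000000 in
/-- **Quantitative pointwise consistency of the SOTS approximation.**  Under the SOTS
hypotheses (periodic C¹ coefficients, periodic cell functions solving the first- and
second-order cell equations, homogenized solution `T⁰`), applying the heterogeneous
operator `−∂_i(k_{ij}(x/ε)∂_j ·)` to
`T^{(2ε)}(x) = T⁰(x) + ε M_α(x/ε)∂_α T⁰(x) + ε² M_{α₁α₂}(x/ε)∂²_{α₁α₂}T⁰(x)`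
reproduces `h` up to `O(ε)`, uniformly on compact subsets of `Ω`. -/
theorem sots_pointwise_consistency (n : ℕ) (hn : 1 ≤ n)
    (Ω : Set (Fin n → ℝ)) (hΩ : IsOpen Ω)
    (k : Fin n → Fin n → (Fin n → ℝ) → ℝ)
    (hk : ∀ i j, ContDiff ℝ 1 (k i j))
    (hkper : ∀ i j (y : Fin n → ℝ) (z : Fin n → ℤ),
      k i j (y + fun t => (z t : ℝ)) = k i j y)
    (khat : Fin n → Fin n → ℝ)
    (h : (Fin n → ℝ) → ℝ)
    (T0 : (Fin n → ℝ) → ℝ) (hT0 : ContDiffOn ℝ 4 T0 Ω)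
    (hT0eq : ∀ x ∈ Ω, -∑ i, ∑ j, khat i j * pd i (pd j T0) x = h x)
    (M : Fin n → (Fin n → ℝ) → ℝ)
    (hM : ∀ α, ContDiff ℝ 2 (M α))
    (hMper : ∀ α (y : Fin n → ℝ) (z : Fin n → ℤ),
      M α (y + fun t => (z t : ℝ)) = M α y)
    (hcell : ∀ (α : Fin n) (y : Fin n → ℝ),
      ∑ i, pd i (fun y' => ∑ j, k i j y' * pd j (M α) y') y
        = -∑ i, pd i (k i α) y)
    (M2 : Fin n → Fin n → (Fin n → ℝ) → ℝ)
    (hM2 : ∀ α₁ α₂, ContDiff ℝ 2 (M2 α₁ α₂))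
    (hM2per : ∀ α₁ α₂ (y : Fin n → ℝ) (z : Fin n → ℤ),
      M2 α₁ α₂ (y + fun t => (z t : ℝ)) = M2 α₁ α₂ y)
    (hcell2 : ∀ (α₁ α₂ : Fin n) (y : Fin n → ℝ),
      ∑ i, pd i (fun y' => ∑ j, k i j y' * pd j (M2 α₁ α₂) y') y
        = khat α₁ α₂ - k α₁ α₂ y
          - ∑ i, pd i (fun y' => k i α₂ y' * M α₁ y') y
          - ∑ j, k α₁ j y * pd j (M α₂) y) :
    ∀ K : Set (Fin n → ℝ), IsCompact K → K ⊆ Ω →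
      ∃ C : ℝ, 0 < C ∧ ∀ ε ∈ Set.Ioc (0:ℝ) 1, ∀ x ∈ K,
        |(-∑ i, pd i (fun x' => ∑ j, k i j (ε⁻¹ • x') *
            pd j (fun x'' => T0 x''
              + ε * ∑ α, M α (ε⁻¹ • x'') * pd α T0 x''
              + ε ^ 2 * ∑ α₁, ∑ α₂,
                  M2 α₁ α₂ (ε⁻¹ • x'') * pd α₁ (pd α₂ T0) x'') x') x)
          - h x| ≤ C * ε := by
  intro K hK hKΩ
  -- basic differentiability facts (periodic side)
  have hkd : ∀ i j, Differentiable ℝ (k i j) := fun i j => (hk i j).differentiable one_ne_zero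
  have hMd : ∀ α, Differentiable ℝ (M α) := fun α => (hM α).differentiable two_ne_zero
  have hM2d : ∀ a b, Differentiable ℝ (M2 a b) :=
    fun a b => (hM2 a b).differentiable two_ne_zero
  have hdM : ∀ (j α : Fin n), ContDiff ℝ 1 (pd j (M α)) := by
    intro j α
    have : ContDiff ℝ ((1 : ℕ) + 1) (M α) := by exact_mod_cast hM α
    exact_mod_cast contDiff_pd j this
  have hdMd : ∀ j α, Differentiable ℝ (pd j (M α)) :=
    fun j α => (hdM j α).differentiable one_ne_zero
  have hdM2 : ∀ (j : Fin n) (a b : Fin n), ContDiff ℝ 1 (pd j (M2 a b)) := by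
    intro j a b
    have : ContDiff ℝ ((1 : ℕ) + 1) (M2 a b) := by exact_mod_cast hM2 a b
    exact_mod_cast contDiff_pd j this
  have hdM2d : ∀ (j : Fin n) (a b : Fin n), Differentiable ℝ (pd j (M2 a b)) :=
    fun j a b => (hdM2 j a b).differentiable one_ne_zero
  -- smoothness chain for T0
  have hT1 : ∀ a, ContDiffOn ℝ 3 (pd a T0) Ω := by
    intro a
    have h4 : ContDiffOn ℝ ((3 : ℕ) + 1) T0 Ω := by exact_mod_cast hT0
    exact_mod_cast contDiffOn_pd a hΩ h4
  have hT2c : ∀ a b, ContDiffOn ℝ 2 (pd a (pd b T0)) Ω := by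
    intro a b
    have h3 : ContDiffOn ℝ ((2 : ℕ) + 1) (pd b T0) Ω := by exact_mod_cast hT1 b
    exact_mod_cast contDiffOn_pd a hΩ h3
  have hT3c : ∀ a b c, ContDiffOn ℝ 1 (pd a (pd b (pd c T0))) Ω := by
    intro a b c
    have h2 : ContDiffOn ℝ ((1 : ℕ) + 1) (pd b (pd c T0)) Ω := by exact_mod_cast hT2c b c
    exact_mod_cast contDiffOn_pd a hΩ h2
  have hT4c : ∀ a b c d, ContinuousOn (pd a (pd b (pd c (pd d T0)))) Ω := by
    intro a b c d
    have h1 : ContDiffOn ℝ ((0 : ℕ) + 1) (pd b (pd c (pd d T0))) Ω := by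
      exact_mod_cast hT3c b c d
    exact (contDiffOn_pd a hΩ h1).continuousOn
  -- differentiability at points of Ω
  have hdAt : ∀ (f : (Fin n → ℝ) → ℝ), ContDiffOn ℝ 1 f Ω →
      ∀ {x : Fin n → ℝ}, x ∈ Ω → DifferentiableAt ℝ f x := by
    intro f hf x hx
    exact ((hf x hx).contDiffAt (hΩ.mem_nhds hx)).differentiableAt one_ne_zero
  have dT0 : ∀ {x}, x ∈ Ω → DifferentiableAt ℝ T0 x :=
    fun {x} hx => hdAt T0 (hT0.of_le (by norm_num)) hx
  have dT1 : ∀ (a : Fin n) {x}, x ∈ Ω → DifferentiableAt ℝ (pd a T0) x :=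
    fun a {x} hx => hdAt _ ((hT1 a).of_le (by norm_num)) hx
  have dT2 : ∀ (a b : Fin n) {x}, x ∈ Ω → DifferentiableAt ℝ (pd a (pd b T0)) x :=
    fun a b {x} hx => hdAt _ ((hT2c a b).of_le (by norm_num)) hx
  have dT3 : ∀ (a b c : Fin n) {x}, x ∈ Ω → DifferentiableAt ℝ (pd a (pd b (pd c T0))) x :=
    fun a b c {x} hx => hdAt _ (hT3c a b c) hx
  -- bounds on the periodic quantities
  obtain ⟨C1, hC1⟩ : ∃ C : ℝ, ∀ y, |∑ i, ∑ j, abs (k i j y)| ≤ C := by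
    apply bounded_of_periodic
    · exact continuous_finset_sum _ fun i _ =>
        continuous_finset_sum _ fun j _ => (hk i j).continuous.abs
    · intro y z
      exact Finset.sum_congr rfl fun i _ => Finset.sum_congr rfl fun j _ => by
        rw [hkper i j y z]
  obtain ⟨C2, hC2⟩ : ∃ C : ℝ, ∀ y, |∑ l, ∑ i, ∑ j, abs (pd l (k i j) y)| ≤ C := by
    apply bounded_of_periodic
    · exact continuous_finset_sum _ fun l _ => continuous_finset_sum _ fun i _ =>
        continuous_finset_sum _ fun j _ => (continuous_pd l (hk i j)).abs
    · intro y z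
      exact Finset.sum_congr rfl fun l _ => Finset.sum_congr rfl fun i _ =>
        Finset.sum_congr rfl fun j _ => by
          rw [pd_periodic (hkd i j) (hkper i j) l y z]
  obtain ⟨C3, hC3⟩ : ∃ C : ℝ, ∀ y, |∑ α, abs (M α y)| ≤ C := by
    apply bounded_of_periodic
    · exact continuous_finset_sum _ fun α _ => (hM α).continuous.abs
    · intro y z
      exact Finset.sum_congr rfl fun α _ => by rw [hMper α y z]
  obtain ⟨C4, hC4⟩ : ∃ C : ℝ, ∀ y, |∑ a, ∑ b, abs (M2 a b y)| ≤ C := by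
    apply bounded_of_periodic
    · exact continuous_finset_sum _ fun a _ =>
        continuous_finset_sum _ fun b _ => (hM2 a b).continuous.abs
    · intro y z
      exact Finset.sum_congr rfl fun a _ => Finset.sum_congr rfl fun b _ => by
        rw [hM2per a b y z]
  obtain ⟨C5, hC5⟩ : ∃ C : ℝ, ∀ y, |∑ l, ∑ a, ∑ b, abs (pd l (M2 a b) y)| ≤ C := by
    apply bounded_of_periodic
    · exact continuous_finset_sum _ fun l _ => continuous_finset_sum _ fun a _ =>
        continuous_finset_sum _ fun b _ => (continuous_pd l ((hM2 a b).of_le one_le_two)).abs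
    · intro y z
      exact Finset.sum_congr rfl fun l _ => Finset.sum_congr rfl fun a _ =>
        Finset.sum_congr rfl fun b _ => by
          rw [pd_periodic (hM2d a b) (hM2per a b) l y z]
  set Cy : ℝ := |C1| + |C2| + |C3| + |C4| + |C5| + 1 with hCy
  have hCy1 : (1 : ℝ) ≤ Cy := by
    rw [hCy]
    have := abs_nonneg C1; have := abs_nonneg C2; have := abs_nonneg C3
    have := abs_nonneg C4; have := abs_nonneg C5
    linarith
  have bKV : ∀ (i j : Fin n) (y : Fin n → ℝ), |k i j y| ≤ Cy := by
    intro i j y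
    have h0 := (abs_le_sum2 (fun i' j' => k i' j' y) i j).trans
      ((le_abs_self _).trans (hC1 y))
    have h1 : C1 ≤ |C1| := le_abs_self C1
    have h2 : 0 ≤ |C2| + |C3| + |C4| + |C5| + 1 := by positivity
    rw [hCy]; linarith
  have bDK : ∀ (l i j : Fin n) (y : Fin n → ℝ), |pd l (k i j) y| ≤ Cy := by
    intro l i j y
    have h0 := (abs_le_sum3 (fun l' i' j' => pd l' (k i' j') y) l i j).trans
      ((le_abs_self _).trans (hC2 y))
    have h1 : C2 ≤ |C2| := le_abs_self C2
    have h2 : 0 ≤ |C1| + |C3| + |C4| + |C5| + 1 := by positivity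
    rw [hCy]; linarith
  have bMV : ∀ (α : Fin n) (y : Fin n → ℝ), |M α y| ≤ Cy := by
    intro α y
    have h0 := (abs_le_sum1 (fun α' => M α' y) α).trans ((le_abs_self _).trans (hC3 y))
    have h1 : C3 ≤ |C3| := le_abs_self C3
    have h2 : 0 ≤ |C1| + |C2| + |C4| + |C5| + 1 := by positivity
    rw [hCy]; linarith
  have bM2V : ∀ (a b : Fin n) (y : Fin n → ℝ), |M2 a b y| ≤ Cy := by
    intro a b y
    have h0 := (abs_le_sum2 (fun a' b' => M2 a' b' y) a b).trans
      ((le_abs_self _).trans (hC4 y))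
    have h1 : C4 ≤ |C4| := le_abs_self C4
    have h2 : 0 ≤ |C1| + |C2| + |C3| + |C5| + 1 := by positivity
    rw [hCy]; linarith
  have bDM2 : ∀ (l a b : Fin n) (y : Fin n → ℝ), |pd l (M2 a b) y| ≤ Cy := by
    intro l a b y
    have h0 := (abs_le_sum3 (fun l' a' b' => pd l' (M2 a' b') y) l a b).trans
      ((le_abs_self _).trans (hC5 y))
    have h1 : C5 ≤ |C5| := le_abs_self C5
    have h2 : 0 ≤ |C1| + |C2| + |C3| + |C4| + 1 := by positivity
    rw [hCy]; linarith
  -- bound for the T0-derivatives on K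
  obtain ⟨CP, hCP⟩ : ∃ CP : ℝ, ∀ x ∈ K,
      ((∑ i, ∑ j, ∑ a, abs (pd i (pd j (pd a T0)) x))
        + ∑ i, ∑ j, ∑ a, ∑ b, abs (pd i (pd j (pd a (pd b T0))) x)) ≤ CP := by
    obtain ⟨CP, hCP⟩ := hK.exists_bound_of_continuousOn (f := fun x =>
      ((∑ i, ∑ j, ∑ a, abs (pd i (pd j (pd a T0)) x))
        + ∑ i, ∑ j, ∑ a, ∑ b, abs (pd i (pd j (pd a (pd b T0))) x)))
      (by
        apply ContinuousOn.add
        · exact (continuousOn_finset_sum _ fun i _ => continuousOn_finset_sum _ fun j _ =>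
            continuousOn_finset_sum _ fun a _ =>
              ((hT3c i j a).continuousOn.mono hKΩ).abs)
        · exact (continuousOn_finset_sum _ fun i _ => continuousOn_finset_sum _ fun j _ =>
            continuousOn_finset_sum _ fun a _ => continuousOn_finset_sum _ fun b _ =>
              ((hT4c i j a b).mono hKΩ).abs))
    exact ⟨CP, fun x hx => (le_abs_self _).trans (by simpa using hCP x hx)⟩
  set Cx : ℝ := |CP| + 1 with hCx
  have hCx1 : (1 : ℝ) ≤ Cx := by
    rw [hCx]; have := abs_nonneg CP; linarith
  have bT3 : ∀ (i j a : Fin n) {x}, x ∈ K → |pd i (pd j (pd a T0)) x| ≤ Cx := by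
    intro i j a x hx
    have h1 : |pd i (pd j (pd a T0)) x| ≤ ∑ i', ∑ j', ∑ a', abs (pd i' (pd j' (pd a' T0)) x) :=
      abs_le_sum3 (fun i' j' a' => pd i' (pd j' (pd a' T0)) x) i j a
    have h2 : (0:ℝ) ≤ ∑ i, ∑ j, ∑ a, ∑ b, abs (pd i (pd j (pd a (pd b T0))) x) :=
      Finset.sum_nonneg fun _ _ => Finset.sum_nonneg fun _ _ =>
        Finset.sum_nonneg fun _ _ => Finset.sum_nonneg fun _ _ => abs_nonneg _
    have h3 := hCP x hx
    have h4 : CP ≤ |CP| := le_abs_self CP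
    rw [hCx]; linarith
  have bT4 : ∀ (i j a b : Fin n) {x}, x ∈ K → |pd i (pd j (pd a (pd b T0))) x| ≤ Cx := by
    intro i j a b x hx
    have h1 : |pd i (pd j (pd a (pd b T0))) x|
        ≤ ∑ i', ∑ j', ∑ a', ∑ b', abs (pd i' (pd j' (pd a' (pd b' T0))) x) :=
      abs_le_sum4 (fun i' j' a' b' => pd i' (pd j' (pd a' (pd b' T0))) x) i j a b
    have h2 : (0:ℝ) ≤ ∑ i, ∑ j, ∑ a, abs (pd i (pd j (pd a T0)) x) :=
      Finset.sum_nonneg fun _ _ => Finset.sum_nonneg fun _ _ =>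
        Finset.sum_nonneg fun _ _ => abs_nonneg _
    have h3 := hCP x hx
    have h4 : CP ≤ |CP| := le_abs_self CP
    rw [hCx]; linarith
  -- the final constant
  have hn1 : (1:ℝ) ≤ (n:ℝ) := by exact_mod_cast hn
  refine ⟨5 * (n:ℝ)^4 * Cy^2 * Cx + 1, by positivity, ?_⟩
  rintro ε ⟨hε0, hε1⟩ x hxK
  have hxΩ : x ∈ Ω := hKΩ hxK
  have hεne : ε ≠ 0 := ne_of_gt hε0
  -- differentiability of the oscillating sums
  have dS1 : ∀ {x' : Fin n → ℝ}, x' ∈ Ω →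
      DifferentiableAt ℝ (fun x'' => ∑ α, M α (ε⁻¹ • x'') * pd α T0 x'') x' :=
    fun {x'} hx' => DifferentiableAt.fun_sum fun α _ =>
      (diff_scale (hMd α _)).mul (dT1 α hx')
  have dS2 : ∀ {x' : Fin n → ℝ}, x' ∈ Ω →
      DifferentiableAt ℝ
        (fun x'' => ∑ a, ∑ b, M2 a b (ε⁻¹ • x'') * pd a (pd b T0) x'') x' :=
    fun {x'} hx' => DifferentiableAt.fun_sum fun a _ => DifferentiableAt.fun_sum fun b _ =>
      (diff_scale (hM2d a b _)).mul (dT2 a b hx')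
  -- Step A: first-layer derivative of the two-scale ansatz
  have stepA : ∀ (j : Fin n) (x' : Fin n → ℝ), x' ∈ Ω →
      pd j (fun x'' => T0 x''
          + ε * ∑ α, M α (ε⁻¹ • x'') * pd α T0 x''
          + ε ^ 2 * ∑ α₁, ∑ α₂, M2 α₁ α₂ (ε⁻¹ • x'') * pd α₁ (pd α₂ T0) x'') x'
      = pd j T0 x'
        + ε * ∑ α, M α (ε⁻¹ • x') * pd j (pd α T0) x'
        + ∑ α, pd j (M α) (ε⁻¹ • x') * pd α T0 x'
        + ε ^ 2 * ∑ a, ∑ b, M2 a b (ε⁻¹ • x') * pd j (pd a (pd b T0)) x'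
        + ε * ∑ a, ∑ b, pd j (M2 a b) (ε⁻¹ • x') * pd a (pd b T0) x' := by
    intro j x' hx'
    have e1 : pd j (fun x'' => ∑ α, M α (ε⁻¹ • x'') * pd α T0 x'') x'
        = ∑ α, (M α (ε⁻¹ • x') * pd j (pd α T0) x'
            + ε⁻¹ * pd j (M α) (ε⁻¹ • x') * pd α T0 x') := by
      rw [pd_sum Finset.univ (fun α _ => (diff_scale (hMd α _)).fun_mul (dT1 α hx'))]
      refine Finset.sum_congr rfl fun α _ => ?_
      rw [pd_mul (diff_scale (hMd α _)) (dT1 α hx'),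
        pd_scale (hMd α (ε⁻¹ • x'))]
    have e2 : pd j (fun x'' => ∑ a, ∑ b, M2 a b (ε⁻¹ • x'') * pd a (pd b T0) x'') x'
        = ∑ a, ∑ b, (M2 a b (ε⁻¹ • x') * pd j (pd a (pd b T0)) x'
            + ε⁻¹ * pd j (M2 a b) (ε⁻¹ • x') * pd a (pd b T0) x') := by
      rw [pd_sum Finset.univ (fun a _ => DifferentiableAt.fun_sum fun b _ =>
        (diff_scale (hM2d a b _)).fun_mul (dT2 a b hx'))]
      refine Finset.sum_congr rfl fun a _ => ?_
      rw [pd_sum Finset.univ (fun b _ => (diff_scale (hM2d a b _)).fun_mul (dT2 a b hx'))]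
      refine Finset.sum_congr rfl fun b _ => ?_
      rw [pd_mul (diff_scale (hM2d a b _)) (dT2 a b hx'),
        pd_scale (hM2d a b (ε⁻¹ • x'))]
    rw [pd_add ((dT0 hx').fun_add ((dS1 hx').const_mul ε)) ((dS2 hx').const_mul (ε ^ 2)),
      pd_add (dT0 hx') ((dS1 hx').const_mul ε),
      pd_const_mul ε (dS1 hx'), pd_const_mul (ε ^ 2) (dS2 hx'), e1, e2]
    rw [Finset.sum_add_distrib, mul_add]
    have r1 : ε * ∑ α, ε⁻¹ * pd j (M α) (ε⁻¹ • x') * pd α T0 x'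
        = ∑ α, pd j (M α) (ε⁻¹ • x') * pd α T0 x' := by
      rw [Finset.mul_sum]
      exact Finset.sum_congr rfl fun α _ => by field_simp
    have r2 : (∑ a, ∑ b, (M2 a b (ε⁻¹ • x') * pd j (pd a (pd b T0)) x'
            + ε⁻¹ * pd j (M2 a b) (ε⁻¹ • x') * pd a (pd b T0) x'))
        = (∑ a, ∑ b, M2 a b (ε⁻¹ • x') * pd j (pd a (pd b T0)) x')
          + ∑ a, ∑ b, ε⁻¹ * pd j (M2 a b) (ε⁻¹ • x') * pd a (pd b T0) x' := by
      simp only [Finset.sum_add_distrib]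
    rw [r2, mul_add, r1]
    have r3 : ε ^ 2 * ∑ a, ∑ b, ε⁻¹ * pd j (M2 a b) (ε⁻¹ • x') * pd a (pd b T0) x'
        = ε * ∑ a, ∑ b, pd j (M2 a b) (ε⁻¹ • x') * pd a (pd b T0) x' := by
      rw [Finset.mul_sum, Finset.mul_sum]
      refine Finset.sum_congr rfl fun a _ => ?_
      rw [Finset.mul_sum, Finset.mul_sum]
      refine Finset.sum_congr rfl fun b _ => ?_
      field_simp
    rw [r3]
    ring
  -- differentiability of F j at x
  have dF : ∀ j : Fin n, DifferentiableAt ℝ (fun x' =>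
      pd j T0 x'
        + ε * ∑ α, M α (ε⁻¹ • x') * pd j (pd α T0) x'
        + ∑ α, pd j (M α) (ε⁻¹ • x') * pd α T0 x'
        + ε ^ 2 * ∑ a, ∑ b, M2 a b (ε⁻¹ • x') * pd j (pd a (pd b T0)) x'
        + ε * ∑ a, ∑ b, pd j (M2 a b) (ε⁻¹ • x') * pd a (pd b T0) x') x := by
    intro j
    refine DifferentiableAt.add (DifferentiableAt.add (DifferentiableAt.add
      (DifferentiableAt.add (dT1 j hxΩ) ?_) ?_) ?_) ?_
    · exact (DifferentiableAt.fun_sum fun α _ =>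
        (diff_scale (hMd α _)).mul (dT2 j α hxΩ)).const_mul ε
    · exact DifferentiableAt.fun_sum fun α _ =>
        (diff_scale (hdMd j α _)).mul (dT1 α hxΩ)
    · exact (DifferentiableAt.fun_sum fun a _ => DifferentiableAt.fun_sum fun b _ =>
        (diff_scale (hM2d a b _)).mul (dT3 j a b hxΩ)).const_mul (ε ^ 2)
    · exact (DifferentiableAt.fun_sum fun a _ => DifferentiableAt.fun_sum fun b _ =>
        (diff_scale (hdM2d j a b _)).mul (dT2 a b hxΩ)).const_mul ε
  -- Step C : second-layer derivative of F j at x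
  have stepC : ∀ i j : Fin n, pd i (fun x' =>
      pd j T0 x'
        + ε * ∑ α, M α (ε⁻¹ • x') * pd j (pd α T0) x'
        + ∑ α, pd j (M α) (ε⁻¹ • x') * pd α T0 x'
        + ε ^ 2 * ∑ a, ∑ b, M2 a b (ε⁻¹ • x') * pd j (pd a (pd b T0)) x'
        + ε * ∑ a, ∑ b, pd j (M2 a b) (ε⁻¹ • x') * pd a (pd b T0) x') x
      = pd i (pd j T0) x
        + (ε * ∑ α, M α (ε⁻¹ • x) * pd i (pd j (pd α T0)) x
            + ∑ α, pd i (M α) (ε⁻¹ • x) * pd j (pd α T0) x)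
        + (∑ α, pd j (M α) (ε⁻¹ • x) * pd i (pd α T0) x
            + ε⁻¹ * ∑ α, pd i (pd j (M α)) (ε⁻¹ • x) * pd α T0 x)
        + (ε ^ 2 * ∑ a, ∑ b, M2 a b (ε⁻¹ • x) * pd i (pd j (pd a (pd b T0))) x
            + ε * ∑ a, ∑ b, pd i (M2 a b) (ε⁻¹ • x) * pd j (pd a (pd b T0)) x)
        + (ε * ∑ a, ∑ b, pd j (M2 a b) (ε⁻¹ • x) * pd i (pd a (pd b T0)) x
            + ∑ a, ∑ b, pd i (pd j (M2 a b)) (ε⁻¹ • x) * pd a (pd b T0) x) := by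
    intro i j
    have dB : DifferentiableAt ℝ
        (fun x' => ∑ α, M α (ε⁻¹ • x') * pd j (pd α T0) x') x :=
      DifferentiableAt.fun_sum fun α _ => (diff_scale (hMd α _)).mul (dT2 j α hxΩ)
    have dC : DifferentiableAt ℝ
        (fun x' => ∑ α, pd j (M α) (ε⁻¹ • x') * pd α T0 x') x :=
      DifferentiableAt.fun_sum fun α _ => (diff_scale (hdMd j α _)).mul (dT1 α hxΩ)
    have dD : DifferentiableAt ℝ
        (fun x' => ∑ a, ∑ b, M2 a b (ε⁻¹ • x') * pd j (pd a (pd b T0)) x') x :=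
      DifferentiableAt.fun_sum fun a _ => DifferentiableAt.fun_sum fun b _ =>
        (diff_scale (hM2d a b _)).mul (dT3 j a b hxΩ)
    have dE : DifferentiableAt ℝ
        (fun x' => ∑ a, ∑ b, pd j (M2 a b) (ε⁻¹ • x') * pd a (pd b T0) x') x :=
      DifferentiableAt.fun_sum fun a _ => DifferentiableAt.fun_sum fun b _ =>
        (diff_scale (hdM2d j a b _)).mul (dT2 a b hxΩ)
    have eB : pd i (fun x' => ∑ α, M α (ε⁻¹ • x') * pd j (pd α T0) x') x
        = ∑ α, (M α (ε⁻¹ • x) * pd i (pd j (pd α T0)) x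
            + ε⁻¹ * pd i (M α) (ε⁻¹ • x) * pd j (pd α T0) x) := by
      rw [pd_sum Finset.univ (fun α _ => (diff_scale (hMd α _)).fun_mul (dT2 j α hxΩ))]
      refine Finset.sum_congr rfl fun α _ => ?_
      rw [pd_mul (diff_scale (hMd α _)) (dT2 j α hxΩ), pd_scale (hMd α (ε⁻¹ • x))]
    have eC : pd i (fun x' => ∑ α, pd j (M α) (ε⁻¹ • x') * pd α T0 x') x
        = ∑ α, (pd j (M α) (ε⁻¹ • x) * pd i (pd α T0) x
            + ε⁻¹ * pd i (pd j (M α)) (ε⁻¹ • x) * pd α T0 x) := by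
      rw [pd_sum Finset.univ (fun α _ => (diff_scale (hdMd j α _)).fun_mul (dT1 α hxΩ))]
      refine Finset.sum_congr rfl fun α _ => ?_
      rw [pd_mul (diff_scale (hdMd j α _)) (dT1 α hxΩ), pd_scale (hdMd j α (ε⁻¹ • x))]
    have eD : pd i (fun x' => ∑ a, ∑ b, M2 a b (ε⁻¹ • x') * pd j (pd a (pd b T0)) x') x
        = ∑ a, ∑ b, (M2 a b (ε⁻¹ • x) * pd i (pd j (pd a (pd b T0))) x
            + ε⁻¹ * pd i (M2 a b) (ε⁻¹ • x) * pd j (pd a (pd b T0)) x) := by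
      rw [pd_sum Finset.univ (fun a _ => DifferentiableAt.fun_sum fun b _ =>
        (diff_scale (hM2d a b _)).fun_mul (dT3 j a b hxΩ))]
      refine Finset.sum_congr rfl fun a _ => ?_
      rw [pd_sum Finset.univ (fun b _ => (diff_scale (hM2d a b _)).fun_mul (dT3 j a b hxΩ))]
      refine Finset.sum_congr rfl fun b _ => ?_
      rw [pd_mul (diff_scale (hM2d a b _)) (dT3 j a b hxΩ), pd_scale (hM2d a b (ε⁻¹ • x))]
    have eE : pd i (fun x' => ∑ a, ∑ b, pd j (M2 a b) (ε⁻¹ • x') * pd a (pd b T0) x') x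
        = ∑ a, ∑ b, (pd j (M2 a b) (ε⁻¹ • x) * pd i (pd a (pd b T0)) x
            + ε⁻¹ * pd i (pd j (M2 a b)) (ε⁻¹ • x) * pd a (pd b T0) x) := by
      rw [pd_sum Finset.univ (fun a _ => DifferentiableAt.fun_sum fun b _ =>
        (diff_scale (hdM2d j a b _)).fun_mul (dT2 a b hxΩ))]
      refine Finset.sum_congr rfl fun a _ => ?_
      rw [pd_sum Finset.univ (fun b _ => (diff_scale (hdM2d j a b _)).fun_mul (dT2 a b hxΩ))]
      refine Finset.sum_congr rfl fun b _ => ?_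
      rw [pd_mul (diff_scale (hdM2d j a b _)) (dT2 a b hxΩ),
        pd_scale (hdM2d j a b (ε⁻¹ • x))]
    rw [pd_add (DifferentiableAt.fun_add (DifferentiableAt.fun_add
        (DifferentiableAt.fun_add (dT1 j hxΩ) (dB.const_mul ε)) dC) (dD.const_mul (ε ^ 2)))
        (dE.const_mul ε),
      pd_add (DifferentiableAt.fun_add (DifferentiableAt.fun_add (dT1 j hxΩ) (dB.const_mul ε)) dC)
        (dD.const_mul (ε ^ 2)),
      pd_add (DifferentiableAt.fun_add (dT1 j hxΩ) (dB.const_mul ε)) dC,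
      pd_add (dT1 j hxΩ) (dB.const_mul ε),
      pd_const_mul ε dB, pd_const_mul (ε ^ 2) dD, pd_const_mul ε dE, eB, eC, eD, eE]
    have rB : ε * ∑ α, (M α (ε⁻¹ • x) * pd i (pd j (pd α T0)) x
          + ε⁻¹ * pd i (M α) (ε⁻¹ • x) * pd j (pd α T0) x)
        = ε * ∑ α, M α (ε⁻¹ • x) * pd i (pd j (pd α T0)) x
          + ∑ α, pd i (M α) (ε⁻¹ • x) * pd j (pd α T0) x := by
      rw [Finset.sum_add_distrib, mul_add]
      congr 1
      rw [Finset.mul_sum]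
      exact Finset.sum_congr rfl fun α _ => by field_simp
    have rC : (∑ α, (pd j (M α) (ε⁻¹ • x) * pd i (pd α T0) x
          + ε⁻¹ * pd i (pd j (M α)) (ε⁻¹ • x) * pd α T0 x))
        = ∑ α, pd j (M α) (ε⁻¹ • x) * pd i (pd α T0) x
          + ε⁻¹ * ∑ α, pd i (pd j (M α)) (ε⁻¹ • x) * pd α T0 x := by
      rw [Finset.sum_add_distrib, Finset.mul_sum]
      congr 1
      exact Finset.sum_congr rfl fun α _ => by ring
    have rD : ε ^ 2 * ∑ a, ∑ b, (M2 a b (ε⁻¹ • x) * pd i (pd j (pd a (pd b T0))) x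
          + ε⁻¹ * pd i (M2 a b) (ε⁻¹ • x) * pd j (pd a (pd b T0)) x)
        = ε ^ 2 * ∑ a, ∑ b, M2 a b (ε⁻¹ • x) * pd i (pd j (pd a (pd b T0))) x
          + ε * ∑ a, ∑ b, pd i (M2 a b) (ε⁻¹ • x) * pd j (pd a (pd b T0)) x := by
      simp only [Finset.sum_add_distrib, mul_add]
      congr 1
      rw [Finset.mul_sum, Finset.mul_sum]
      refine Finset.sum_congr rfl fun a _ => ?_
      rw [Finset.mul_sum, Finset.mul_sum]
      exact Finset.sum_congr rfl fun b _ => by field_simp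
    have rE : ε * ∑ a, ∑ b, (pd j (M2 a b) (ε⁻¹ • x) * pd i (pd a (pd b T0)) x
          + ε⁻¹ * pd i (pd j (M2 a b)) (ε⁻¹ • x) * pd a (pd b T0) x)
        = ε * ∑ a, ∑ b, pd j (M2 a b) (ε⁻¹ • x) * pd i (pd a (pd b T0)) x
          + ∑ a, ∑ b, pd i (pd j (M2 a b)) (ε⁻¹ • x) * pd a (pd b T0) x := by
      simp only [Finset.sum_add_distrib, mul_add]
      congr 1
      rw [Finset.mul_sum]
      refine Finset.sum_congr rfl fun a _ => ?_
      rw [Finset.mul_sum]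
      exact Finset.sum_congr rfl fun b _ => by field_simp
    rw [rB, rC, rD, rE]
  -- Step B : outer derivative via eventual equality on Ω
  have stepB : ∀ i : Fin n,
      pd i (fun x' => ∑ j, k i j (ε⁻¹ • x') *
          pd j (fun x'' => T0 x''
            + ε * ∑ α, M α (ε⁻¹ • x'') * pd α T0 x''
            + ε ^ 2 * ∑ α₁, ∑ α₂,
                M2 α₁ α₂ (ε⁻¹ • x'') * pd α₁ (pd α₂ T0) x'') x') x
      = ∑ j, (k i j (ε⁻¹ • x) *
          pd i (fun x' =>
            pd j T0 x'
              + ε * ∑ α, M α (ε⁻¹ • x') * pd j (pd α T0) x'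
              + ∑ α, pd j (M α) (ε⁻¹ • x') * pd α T0 x'
              + ε ^ 2 * ∑ a, ∑ b, M2 a b (ε⁻¹ • x') * pd j (pd a (pd b T0)) x'
              + ε * ∑ a, ∑ b, pd j (M2 a b) (ε⁻¹ • x') * pd a (pd b T0) x') x
        + ε⁻¹ * pd i (k i j) (ε⁻¹ • x) *
            (pd j T0 x
              + ε * ∑ α, M α (ε⁻¹ • x) * pd j (pd α T0) x
              + ∑ α, pd j (M α) (ε⁻¹ • x) * pd α T0 x
              + ε ^ 2 * ∑ a, ∑ b, M2 a b (ε⁻¹ • x) * pd j (pd a (pd b T0)) x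
              + ε * ∑ a, ∑ b, pd j (M2 a b) (ε⁻¹ • x) * pd a (pd b T0) x)) := by
    intro i
    have hev : (fun x' => ∑ j, k i j (ε⁻¹ • x') *
          pd j (fun x'' => T0 x''
            + ε * ∑ α, M α (ε⁻¹ • x'') * pd α T0 x''
            + ε ^ 2 * ∑ α₁, ∑ α₂,
                M2 α₁ α₂ (ε⁻¹ • x'') * pd α₁ (pd α₂ T0) x'') x')
        =ᶠ[nhds x] (fun x' => ∑ j, k i j (ε⁻¹ • x') *
          (pd j T0 x'
            + ε * ∑ α, M α (ε⁻¹ • x') * pd j (pd α T0) x'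
            + ∑ α, pd j (M α) (ε⁻¹ • x') * pd α T0 x'
            + ε ^ 2 * ∑ a, ∑ b, M2 a b (ε⁻¹ • x') * pd j (pd a (pd b T0)) x'
            + ε * ∑ a, ∑ b, pd j (M2 a b) (ε⁻¹ • x') * pd a (pd b T0) x')) := by
      filter_upwards [hΩ.mem_nhds hxΩ] with x' hx'
      exact Finset.sum_congr rfl fun j _ => by rw [stepA j x' hx']
    rw [pd_congr_nhds hev,
      pd_sum Finset.univ (fun j _ => (diff_scale (hkd i j _)).fun_mul (dF j))]
    refine Finset.sum_congr rfl fun j _ => ?_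
    rw [pd_mul (diff_scale (hkd i j _)) (dF j), pd_scale (hkd i j (ε⁻¹ • x))]
  -- expanded cell equations at the fast point
  have H1' : ∀ α : Fin n, ∑ i, ∑ j,
        (pd i (k i j) (ε⁻¹ • x) * pd j (M α) (ε⁻¹ • x)
          + k i j (ε⁻¹ • x) * pd i (pd j (M α)) (ε⁻¹ • x))
      = -∑ i, pd i (k i α) (ε⁻¹ • x) := by
    intro α
    have expand : ∀ i : Fin n,
        pd i (fun y' => ∑ j, k i j y' * pd j (M α) y') (ε⁻¹ • x)
        = ∑ j, (pd i (k i j) (ε⁻¹ • x) * pd j (M α) (ε⁻¹ • x)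
            + k i j (ε⁻¹ • x) * pd i (pd j (M α)) (ε⁻¹ • x)) := by
      intro i
      rw [pd_sum Finset.univ (fun j _ => ((hkd i j) _).fun_mul ((hdMd j α) _))]
      refine Finset.sum_congr rfl fun j _ => ?_
      rw [pd_mul ((hkd i j) _) ((hdMd j α) _)]
      ring
    calc ∑ i, ∑ j, (pd i (k i j) (ε⁻¹ • x) * pd j (M α) (ε⁻¹ • x)
          + k i j (ε⁻¹ • x) * pd i (pd j (M α)) (ε⁻¹ • x))
        = ∑ i, pd i (fun y' => ∑ j, k i j y' * pd j (M α) y') (ε⁻¹ • x) :=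
          (Finset.sum_congr rfl fun i _ => (expand i).symm)
      _ = -∑ i, pd i (k i α) (ε⁻¹ • x) := hcell α (ε⁻¹ • x)
  have H2' : ∀ a b : Fin n, ∑ i, ∑ j,
        (pd i (k i j) (ε⁻¹ • x) * pd j (M2 a b) (ε⁻¹ • x)
          + k i j (ε⁻¹ • x) * pd i (pd j (M2 a b)) (ε⁻¹ • x))
      = khat a b - k a b (ε⁻¹ • x)
        - ∑ i, (pd i (k i b) (ε⁻¹ • x) * M a (ε⁻¹ • x)
            + k i b (ε⁻¹ • x) * pd i (M a) (ε⁻¹ • x))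
        - ∑ j, k a j (ε⁻¹ • x) * pd j (M b) (ε⁻¹ • x) := by
    intro a b
    have expand : ∀ i : Fin n,
        pd i (fun y' => ∑ j, k i j y' * pd j (M2 a b) y') (ε⁻¹ • x)
        = ∑ j, (pd i (k i j) (ε⁻¹ • x) * pd j (M2 a b) (ε⁻¹ • x)
            + k i j (ε⁻¹ • x) * pd i (pd j (M2 a b)) (ε⁻¹ • x)) := by
      intro i
      rw [pd_sum Finset.univ (fun j _ => ((hkd i j) _).fun_mul ((hdM2d j a b) _))]
      refine Finset.sum_congr rfl fun j _ => ?_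
      rw [pd_mul ((hkd i j) _) ((hdM2d j a b) _)]
      ring
    have expand2 : ∀ i : Fin n,
        pd i (fun y' => k i b y' * M a y') (ε⁻¹ • x)
        = pd i (k i b) (ε⁻¹ • x) * M a (ε⁻¹ • x)
          + k i b (ε⁻¹ • x) * pd i (M a) (ε⁻¹ • x) := by
      intro i
      rw [pd_mul ((hkd i b) _) ((hMd a) _)]
      ring
    calc ∑ i, ∑ j, (pd i (k i j) (ε⁻¹ • x) * pd j (M2 a b) (ε⁻¹ • x)
          + k i j (ε⁻¹ • x) * pd i (pd j (M2 a b)) (ε⁻¹ • x))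
        = ∑ i, pd i (fun y' => ∑ j, k i j y' * pd j (M2 a b) y') (ε⁻¹ • x) :=
          (Finset.sum_congr rfl fun i _ => (expand i).symm)
      _ = khat a b - k a b (ε⁻¹ • x)
          - ∑ i, pd i (fun y' => k i b y' * M a y') (ε⁻¹ • x)
          - ∑ j, k a j (ε⁻¹ • x) * pd j (M b) (ε⁻¹ • x) := hcell2 a b (ε⁻¹ • x)
      _ = khat a b - k a b (ε⁻¹ • x)
          - ∑ i, (pd i (k i b) (ε⁻¹ • x) * M a (ε⁻¹ • x)
              + k i b (ε⁻¹ • x) * pd i (M a) (ε⁻¹ • x))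
          - ∑ j, k a j (ε⁻¹ • x) * pd j (M b) (ε⁻¹ • x) := by
          rw [Finset.sum_congr rfl fun i _ => expand2 i]
  have Hsym' : ∀ a b : Fin n, pd a (pd b T0) x = pd b (pd a T0) x :=
    fun a b => pd_pd_symm hΩ (hT0.of_le (by norm_num)) hxΩ a b
  -- assemble via the algebraic identity
  have SBtotal : (∑ i, pd i (fun x' => ∑ j, k i j (ε⁻¹ • x') *
          pd j (fun x'' => T0 x''
            + ε * ∑ α, M α (ε⁻¹ • x'') * pd α T0 x''
            + ε ^ 2 * ∑ α₁, ∑ α₂,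
                M2 α₁ α₂ (ε⁻¹ • x'') * pd α₁ (pd α₂ T0) x'') x') x)
      = -h x + ε * (
        (∑ i, ∑ j, ∑ a, ∑ b, pd i (k i j) (ε⁻¹ • x) *
            (M2 a b (ε⁻¹ • x) * pd j (pd a (pd b T0)) x))
      + (∑ i, ∑ j, ∑ α, k i j (ε⁻¹ • x) *
            (M α (ε⁻¹ • x) * pd i (pd j (pd α T0)) x))
      + (∑ i, ∑ j, ∑ a, ∑ b, k i j (ε⁻¹ • x) *
            (pd i (M2 a b) (ε⁻¹ • x) * pd j (pd a (pd b T0)) x))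
      + (∑ i, ∑ j, ∑ a, ∑ b, k i j (ε⁻¹ • x) *
            (pd j (M2 a b) (ε⁻¹ • x) * pd i (pd a (pd b T0)) x))
      + ε * ∑ i, ∑ j, ∑ a, ∑ b, k i j (ε⁻¹ • x) *
            (M2 a b (ε⁻¹ • x) * pd i (pd j (pd a (pd b T0))) x)) := by
    rw [Finset.sum_congr rfl fun i _ => stepB i]
    rw [Finset.sum_congr rfl fun i _ => Finset.sum_congr rfl fun j _ => by rw [stepC i j]]
    exact sots_algebra hεne
      (fun i j => k i j (ε⁻¹ • x)) (fun i j => pd i (k i j) (ε⁻¹ • x))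
      (fun α => M α (ε⁻¹ • x)) (fun l α => pd l (M α) (ε⁻¹ • x))
      (fun i j α => pd i (pd j (M α)) (ε⁻¹ • x))
      (fun a b => M2 a b (ε⁻¹ • x)) (fun l a b => pd l (M2 a b) (ε⁻¹ • x))
      (fun i j a b => pd i (pd j (M2 a b)) (ε⁻¹ • x))
      khat
      (fun a => pd a T0 x) (fun a b => pd a (pd b T0) x)
      (fun a b c => pd a (pd b (pd c T0)) x)
      (fun a b c d => pd a (pd b (pd c (pd d T0))) x)
      (h x) Hsym' H1' H2' (hT0eq x hxΩ)
  -- final bound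
  have mul3 : ∀ {a b c A B C' : ℝ}, |a| ≤ A → |b| ≤ B → |c| ≤ C' →
      |a * (b * c)| ≤ A * (B * C') := by
    intro a b c A B C' ha hb hc
    rw [abs_mul, abs_mul]
    exact mul_le_mul ha
      (mul_le_mul hb hc (abs_nonneg _) ((abs_nonneg _).trans hb))
      (mul_nonneg (abs_nonneg _) (abs_nonneg _)) ((abs_nonneg _).trans ha)
  set B : ℝ := Cy * (Cy * Cx) with hB
  have hB0 : (0:ℝ) ≤ B := by
    rw [hB]
    exact mul_nonneg (by linarith) (mul_nonneg (by linarith) (by linarith))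
  set R1 : ℝ := ∑ i, ∑ j, ∑ a, ∑ b, pd i (k i j) (ε⁻¹ • x) *
      (M2 a b (ε⁻¹ • x) * pd j (pd a (pd b T0)) x) with hR1
  set R2 : ℝ := ∑ i, ∑ j, ∑ α, k i j (ε⁻¹ • x) *
      (M α (ε⁻¹ • x) * pd i (pd j (pd α T0)) x) with hR2
  set R3 : ℝ := ∑ i, ∑ j, ∑ a, ∑ b, k i j (ε⁻¹ • x) *
      (pd i (M2 a b) (ε⁻¹ • x) * pd j (pd a (pd b T0)) x) with hR3
  set R4 : ℝ := ∑ i, ∑ j, ∑ a, ∑ b, k i j (ε⁻¹ • x) *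
      (pd j (M2 a b) (ε⁻¹ • x) * pd i (pd a (pd b T0)) x) with hR4
  set R5 : ℝ := ∑ i, ∑ j, ∑ a, ∑ b, k i j (ε⁻¹ • x) *
      (M2 a b (ε⁻¹ • x) * pd i (pd j (pd a (pd b T0))) x) with hR5
  have b1 : |R1| ≤ (n:ℝ)^4 * B := by
    rw [hR1]
    exact abs_sum4_le fun i j a b =>
      mul3 (bDK i i j _) (bM2V a b _) (bT3 j a b hxK)
  have b2 : |R2| ≤ (n:ℝ)^4 * B := by
    rw [hR2]
    refine (abs_sum3_le fun i j α =>
      mul3 (bKV i j _) (bMV α _) (bT3 i j α hxK)).trans ?_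
    have : ((n:ℝ))^3 ≤ (n:ℝ)^4 := pow_le_pow_right₀ hn1 (by norm_num)
    exact mul_le_mul_of_nonneg_right this hB0
  have b3 : |R3| ≤ (n:ℝ)^4 * B := by
    rw [hR3]
    exact abs_sum4_le fun i j a b =>
      mul3 (bKV i j _) (bDM2 i a b _) (bT3 j a b hxK)
  have b4 : |R4| ≤ (n:ℝ)^4 * B := by
    rw [hR4]
    exact abs_sum4_le fun i j a b =>
      mul3 (bKV i j _) (bDM2 j a b _) (bT3 i a b hxK)
  have b5 : |ε * R5| ≤ (n:ℝ)^4 * B := by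
    rw [abs_mul, abs_of_pos hε0]
    have h5 : |R5| ≤ (n:ℝ)^4 * B := by
      rw [hR5]
      exact abs_sum4_le fun i j a b =>
        mul3 (bKV i j _) (bM2V a b _) (bT4 i j a b hxK)
    calc ε * |R5| ≤ 1 * ((n:ℝ)^4 * B) :=
        mul_le_mul hε1 h5 (abs_nonneg _) zero_le_one
      _ = (n:ℝ)^4 * B := one_mul _
  have hRtot : |R1 + R2 + R3 + R4 + ε * R5| ≤ 5 * ((n:ℝ)^4 * B) := by
    calc |R1 + R2 + R3 + R4 + ε * R5|
        ≤ |R1 + R2 + R3 + R4| + |ε * R5| := abs_add_le _ _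
      _ ≤ (|R1 + R2 + R3| + |R4|) + |ε * R5| := by
          exact add_le_add_left (abs_add_le _ _) _
      _ ≤ ((|R1 + R2| + |R3|) + |R4|) + |ε * R5| := by
          exact add_le_add_left (add_le_add_left (abs_add_le _ _) _) _
      _ ≤ (((|R1| + |R2|) + |R3|) + |R4|) + |ε * R5| := by
          exact add_le_add_left (add_le_add_left (add_le_add_left (abs_add_le _ _) _) _) _
      _ ≤ 5 * ((n:ℝ)^4 * B) := by linarith
  rw [SBtotal]
  have hre : -(-h x + ε * (R1 + R2 + R3 + R4 + ε * R5)) - h x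
      = ε * (-(R1 + R2 + R3 + R4 + ε * R5)) := by ring
  rw [hre, abs_mul, abs_of_pos hε0, abs_neg]
  have hfin : |R1 + R2 + R3 + R4 + ε * R5| ≤ 5 * (n:ℝ)^4 * Cy^2 * Cx + 1 := by
    have : 5 * ((n:ℝ)^4 * B) = 5 * (n:ℝ)^4 * Cy^2 * Cx := by rw [hB]; ring
    nlinarith [hRtot]
  calc ε * |R1 + R2 + R3 + R4 + ε * R5|
      ≤ ε * (5 * (n:ℝ)^4 * Cy^2 * Cx + 1) :=
        mul_le_mul_of_nonneg_left hfin hε0.le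
    _ = (5 * (n:ℝ)^4 * Cy^2 * Cx + 1) * ε := mul_comm _ _
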